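/- Let d ≥ 1 and α ∈ (0,2). There exists a constant C > 0, depending only on d and α, such that for all x ∈ ℝ^d, writing R := |x|/2, one has ∫_{{y ∈ ℝ^d : |y| ≤ R}} |y|^{1−d−α} |ρ_α(x+y) − ρ_α(x−y)| dy ≤ C (1+|x|)^{−(d+α+1)} R^{2−α}. -/

import Mathlib

open MeasureTheory Real Metric
open scoped ENNReal

noncomputable section

/-- `ρ_α(x) = (1+|x|²)^{-(d+α)/2}`. -/
def rhoA (d : ℕ) (α : ℝ) (x : EuclideanSpace ℝ (Fin d)) : ℝ :=
  (1 + ‖x‖ ^ 2) ^ (-(((d : ℝ) + α) / 2))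

variable {d : ℕ} {α : ℝ}

def rhoA' (d : ℕ) (α : ℝ) (z : EuclideanSpace ℝ (Fin d)) : EuclideanSpace ℝ (Fin d) →L[ℝ] ℝ :=
  ((-(((d : ℝ) + α) / 2)) * (1 + ‖z‖ ^ 2) ^ ((-(((d : ℝ) + α) / 2)) - 1)) • ((2:ℝ) • innerSL ℝ z)

lemma rhoA_hasFDerivAt (z : EuclideanSpace ℝ (Fin d)) :
    HasFDerivAt (rhoA d α) (rhoA' d α z) z := by
  have hA : (0:ℝ) < 1 + ‖z‖ ^ 2 := by positivity
  have h2 : HasFDerivAt (fun z : EuclideanSpace ℝ (Fin d) => 1 + ‖z‖ ^ 2)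
      ((2:ℝ) • innerSL ℝ z) z := by
    have := (hasStrictFDerivAt_norm_sq z).hasFDerivAt.const_add 1
    refine this.congr_fderiv ?_
    ext y; simp [two_smul]
  exact (Real.hasDerivAt_rpow_const (x := 1 + ‖z‖ ^ 2)
      (p := -(((d : ℝ) + α) / 2)) (Or.inl hA.ne')).comp_hasFDerivAt z h2

lemma norm_rhoA'_le (hd0 : (0:ℝ) < d + α) (z : EuclideanSpace ℝ (Fin d)) :
    ‖rhoA' d α z‖ ≤ ((d:ℝ) + α) * ((1 + ‖z‖ ^ 2) ^ ((-(((d : ℝ) + α) / 2)) - 1) * ‖z‖) := by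
  have hA : (0:ℝ) < 1 + ‖z‖ ^ 2 := by positivity
  have hAp := Real.rpow_pos_of_pos hA ((-(((d : ℝ) + α) / 2)) - 1)
  refine (ContinuousLinearMap.opNorm_smul_le _ _).trans ?_
  rw [Real.norm_eq_abs, abs_mul, abs_neg,
    abs_of_nonneg (by positivity : (0:ℝ) ≤ ((d:ℝ)+α)/2), abs_of_pos hAp]
  have h2 : ‖(2:ℝ) • innerSL ℝ z‖ ≤ 2 * ‖z‖ := by
    refine (ContinuousLinearMap.opNorm_smul_le (2:ℝ) _).trans ?_
    rw [innerSL_apply_norm]; norm_num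
  calc ((d:ℝ)+α)/2 * (1 + ‖z‖ ^ 2) ^ ((-(((d : ℝ) + α) / 2)) - 1) * ‖(2:ℝ) • innerSL ℝ z‖
      ≤ ((d:ℝ)+α)/2 * (1 + ‖z‖ ^ 2) ^ ((-(((d : ℝ) + α) / 2)) - 1) * (2 * ‖z‖) := by
        gcongr
    _ = ((d:ℝ) + α) * ((1 + ‖z‖ ^ 2) ^ ((-(((d : ℝ) + α) / 2)) - 1) * ‖z‖) := by ring

lemma norm_rhoA'_bound (hd0 : (0:ℝ) < d + α) (x z : EuclideanSpace ℝ (Fin d))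
    (hz : ‖x‖/2 ≤ ‖z‖) :
    ‖rhoA' d α z‖ ≤ (((d:ℝ)+α) * 2 ^ (((d:ℝ)+α)/2 + 1) * 2 ^ ((d:ℝ)+α+1))
      * (1+‖x‖) ^ (-((d:ℝ)+α+1)) := by
  set s : ℝ := ((d:ℝ)+α)/2 with hs
  set t : ℝ := ‖z‖ with ht
  have ht0 : 0 ≤ t := norm_nonneg z
  have hu0 : (0:ℝ) < 1 + t := by linarith
  have hA : (0:ℝ) < 1 + t ^ 2 := by positivity
  -- step 1
  have step1 : (1 + t ^ 2) ^ (-s - 1) ≤ 2 ^ (s+1) * (1+t) ^ (-(2*s+2)) := by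
    have h1 : ((1+t)^2)/2 ≤ 1 + t ^ 2 := by nlinarith [sq_nonneg (1-t)]
    have h2 : (1 + t^2) ^ (-s-1) ≤ (((1+t)^2)/2) ^ (-s-1) :=
      Real.rpow_le_rpow_of_nonpos (by positivity) h1 (by rw [hs]; linarith)
    have h3 : (((1+t)^2)/2 : ℝ) ^ (-s-1) = 2 ^ (s+1) * (1+t) ^ (-(2*s+2)) := by
      rw [Real.div_rpow (by positivity) (by norm_num)]
      rw [show ((1+t)^2 : ℝ) = (1+t) ^ (2:ℝ) by rw [Real.rpow_two]]
      rw [← Real.rpow_mul hu0.le]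
      rw [div_eq_mul_inv, ← Real.rpow_neg (by norm_num : (0:ℝ) ≤ 2)]
      ring_nf
    rw [h3] at h2; exact h2
  -- step 2
  have step2 : (1 + t ^ 2) ^ (-s - 1) * t ≤ 2 ^ (s+1) * (1+t) ^ (-(2*s+1)) := by
    have := mul_le_mul step1 (by linarith : t ≤ 1 + t) ht0 (by positivity)
    calc (1 + t ^ 2) ^ (-s - 1) * t ≤ 2 ^ (s+1) * (1+t) ^ (-(2*s+2)) * (1+t) := this
      _ = 2 ^ (s+1) * (1+t) ^ (-(2*s+1)) := by
          rw [mul_assoc, ← Real.rpow_add_one hu0.ne' (-(2*s+2)),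
            show (-(2*s+2)+1 : ℝ) = -(2*s+1) by ring]
  -- step 3
  have hux : (1+‖x‖)/2 ≤ 1 + t := by
    have := norm_nonneg x; rw [ht]; linarith
  have step3 : (1+t) ^ (-(2*s+1)) ≤ 2 ^ (2*s+1) * (1+‖x‖) ^ (-(2*s+1)) := by
    have h2 : (1+t) ^ (-(2*s+1)) ≤ ((1+‖x‖)/2) ^ (-(2*s+1)) :=
      Real.rpow_le_rpow_of_nonpos (by positivity) hux (by rw [hs]; linarith)
    have h3 : ((1+‖x‖)/2 : ℝ) ^ (-(2*s+1)) = 2 ^ (2*s+1) * (1+‖x‖) ^ (-(2*s+1)) := by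
      rw [Real.div_rpow (by positivity) (by norm_num)]
      rw [div_eq_mul_inv, ← Real.rpow_neg (by norm_num : (0:ℝ) ≤ 2)]
      ring_nf
    rw [h3] at h2; exact h2
  have key : (1 + t ^ 2) ^ (-s - 1) * t
      ≤ 2 ^ (s+1) * (2 ^ (2*s+1) * (1+‖x‖) ^ (-(2*s+1))) := by
    refine step2.trans ?_
    gcongr
  have h2s : 2*s+1 = (d:ℝ)+α+1 := by rw [hs]; ring
  refine (norm_rhoA'_le hd0 z).trans ?_
  rw [show (-(((d : ℝ) + α) / 2)) - 1 = -s - 1 by rw [hs]]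
  calc ((d:ℝ) + α) * ((1 + t ^ 2) ^ (-s - 1) * t)
      ≤ ((d:ℝ) + α) * (2 ^ (s+1) * (2 ^ (2*s+1) * (1+‖x‖) ^ (-(2*s+1)))) := by
        gcongr
    _ = (((d:ℝ)+α) * 2 ^ (((d:ℝ)+α)/2 + 1) * 2 ^ ((d:ℝ)+α+1)) * (1+‖x‖) ^ (-((d:ℝ)+α+1)) := by
        rw [h2s, hs]; ring

lemma diff_rhoA_bound (hd0 : (0:ℝ) < d + α) (x y : EuclideanSpace ℝ (Fin d))
    (hy : ‖y‖ ≤ ‖x‖/2) :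
    |rhoA d α (x+y) - rhoA d α (x-y)| ≤
      ((((d:ℝ)+α) * 2 ^ (((d:ℝ)+α)/2 + 1) * 2 ^ ((d:ℝ)+α+1)) * (1+‖x‖) ^ (-((d:ℝ)+α+1)))
        * (2 * ‖y‖) := by
  set C : ℝ := (((d:ℝ)+α) * 2 ^ (((d:ℝ)+α)/2 + 1) * 2 ^ ((d:ℝ)+α+1)) * (1+‖x‖) ^ (-((d:ℝ)+α+1))
    with hC
  have hmem1 : x + y ∈ Metric.closedBall x (‖x‖/2) := by
    rw [Metric.mem_closedBall, dist_eq_norm]; simpa using hy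
  have hmem2 : x - y ∈ Metric.closedBall x (‖x‖/2) := by
    rw [Metric.mem_closedBall, dist_eq_norm]; simpa using hy
  have hball : ∀ z ∈ Metric.closedBall x (‖x‖/2), ‖rhoA' d α z‖ ≤ C := by
    intro z hz
    rw [Metric.mem_closedBall, dist_eq_norm] at hz
    have hz2 : ‖x‖/2 ≤ ‖z‖ := by
      have h1 : ‖x‖ - ‖z‖ ≤ ‖x - z‖ := by
        simpa using norm_sub_norm_le x z
      have h2 : ‖x - z‖ = ‖z - x‖ := norm_sub_rev x z
      linarith
    exact norm_rhoA'_bound hd0 x z hz2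
  have hmvt := (convex_closedBall x (‖x‖/2)).norm_image_sub_le_of_norm_hasFDerivWithin_le
    (fun z _ => (rhoA_hasFDerivAt z).hasFDerivWithinAt) hball hmem2 hmem1
  have hCpos : 0 ≤ C := by
    rw [hC]
    have h1 : (0:ℝ) < 1 + ‖x‖ := by positivity
    exact mul_nonneg (mul_nonneg (mul_nonneg hd0.le (Real.rpow_pos_of_pos two_pos _).le)
      (Real.rpow_pos_of_pos two_pos _).le) (Real.rpow_pos_of_pos h1 _).le
  calc |rhoA d α (x+y) - rhoA d α (x-y)| = ‖rhoA d α (x+y) - rhoA d α (x-y)‖ := rfl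
    _ ≤ C * ‖(x+y) - (x-y)‖ := hmvt
    _ ≤ C * (2 * ‖y‖) := by
        gcongr
        have : (x+y) - (x-y) = y + y := by abel
        rw [this]
        calc ‖y + y‖ ≤ ‖y‖ + ‖y‖ := norm_add_le y y
          _ = 2 * ‖y‖ := by ring

lemma nontrivial_euclidean {d : ℕ} (hd : 1 ≤ d) :
    Nontrivial (EuclideanSpace ℝ (Fin d)) := by
  refine ⟨EuclideanSpace.single ⟨0, hd⟩ (1:ℝ), 0, fun h => ?_⟩
  have := congrArg (fun v : EuclideanSpace ℝ (Fin d) => v ⟨0, hd⟩) h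
  simp [EuclideanSpace.single_apply] at this

lemma lintegral_ball_rpow {d : ℕ} (hd : 1 ≤ d) {ε : ℝ} (hε : 0 < ε) :
    ∃ B : ℝ≥0∞, B ≠ ⊤ ∧ ∀ R : ℝ, 0 ≤ R →
      ∫⁻ y in Metric.closedBall (0 : EuclideanSpace ℝ (Fin d)) R,
        ENNReal.ofReal (‖y‖ ^ (ε - d)) ≤ B * ENNReal.ofReal (R ^ ε) := by
  haveI : Nontrivial (EuclideanSpace ℝ (Fin d)) := nontrivial_euclidean hd
  set p : ℝ := ε - d with hp
  set V : ℝ≥0∞ := volume (Metric.ball (0 : EuclideanSpace ℝ (Fin d)) 1) with hV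
  set q : ℝ≥0∞ := ENNReal.ofReal ((2:ℝ) ^ (-ε)) with hq
  set K : ℝ≥0∞ := ENNReal.ofReal ((2:ℝ) ^ |p| * (2:ℝ) ^ (-p)) * V with hK
  have hq1 : q < 1 := by
    rw [hq]
    exact ENNReal.ofReal_lt_one.2 (Real.rpow_lt_one_of_one_lt_of_neg one_lt_two (by linarith))
  have hKt : K ≠ ⊤ := ENNReal.mul_ne_top ENNReal.ofReal_ne_top measure_ball_lt_top.ne
  refine ⟨K * (1 - q)⁻¹, ENNReal.mul_ne_top hKt (ENNReal.inv_ne_top.2 ?_), ?_⟩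
  · simp only [ne_eq, tsub_eq_zero_iff_le]
    exact fun h => absurd (lt_of_lt_of_le hq1 h) (lt_irrefl _)
  intro R hR
  rcases eq_or_lt_of_le hR with hR0 | hR0
  · rw [← hR0, Metric.closedBall_zero,
      setLIntegral_measure_zero _ _ (measure_singleton (0 : EuclideanSpace ℝ (Fin d)))]
    exact zero_le
  -- R > 0
  set A : ℕ → Set (EuclideanSpace ℝ (Fin d)) := fun n =>
    Metric.closedBall 0 (R / 2 ^ n) \ Metric.closedBall 0 (R / 2 ^ (n+1)) with hA
  have cover : Metric.closedBall (0 : EuclideanSpace ℝ (Fin d)) R ⊆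
      {0} ∪ ⋃ n : ℕ, A n := by
    intro y hy
    rw [mem_closedBall_zero_iff] at hy
    rcases eq_or_ne y 0 with rfl | hy0
    · exact Or.inl rfl
    right
    have hny : 0 < ‖y‖ := norm_pos_iff.2 hy0
    have hex : ∃ n : ℕ, R / 2 ^ (n+1) < ‖y‖ := by
      obtain ⟨n, hn⟩ := pow_unbounded_of_one_lt (R / ‖y‖) one_lt_two
      refine ⟨n, ?_⟩
      rw [div_lt_iff₀ hny] at hn
      have h2 : (0:ℝ) < 2 ^ (n+1) := by positivity
      rw [div_lt_iff₀ h2]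
      have hn2 : (2:ℝ) ^ n ≤ 2 ^ (n+1) := by
        have : (0:ℝ) < (2:ℝ)^n := by positivity
        rw [pow_succ]; nlinarith
      nlinarith
    refine Set.mem_iUnion.2 ⟨Nat.find hex, ?_, ?_⟩
    · rw [mem_closedBall_zero_iff]
      rcases Nat.eq_zero_or_pos (Nat.find hex) with h0 | hpos
      · rw [h0]; simpa using hy
      · obtain ⟨m, hm⟩ := Nat.exists_eq_succ_of_ne_zero hpos.ne'
        have := Nat.find_min hex (m := m) (by omega)
        rw [hm]
        push_neg at this
        exact this
    · intro hmem
      rw [mem_closedBall_zero_iff] at hmem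
      exact absurd hmem (Nat.find_spec hex).not_ge
  have hmeas : ∀ n : ℕ, ∫⁻ y in A n, ENNReal.ofReal (‖y‖ ^ p) ≤
      K * ENNReal.ofReal (R ^ ε) * q ^ n := by
    intro n
    set a : ℝ := R / 2 ^ (n+1) with ha_def
    set b : ℝ := R / 2 ^ n with hb_def
    have ha : 0 < a := by rw [ha_def]; positivity
    have hb : 0 < b := by rw [hb_def]; positivity
    have hba : b = 2 * a := by
      rw [ha_def, hb_def, pow_succ]; field_simp
    -- pointwise bound
    have ptw : ∀ y ∈ A n, ENNReal.ofReal (‖y‖ ^ p) ≤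
        ENNReal.ofReal ((2:ℝ) ^ |p| * a ^ p) := by
      intro y hy
      obtain ⟨hyb, hya⟩ := hy
      rw [mem_closedBall_zero_iff] at hyb
      rw [mem_closedBall_zero_iff] at hya
      push_neg at hya
      apply ENNReal.ofReal_le_ofReal
      rcases le_or_gt 0 p with hp0 | hp0
      · rw [abs_of_nonneg hp0]
        calc ‖y‖ ^ p ≤ b ^ p := Real.rpow_le_rpow (norm_nonneg y) hyb hp0
          _ = (2:ℝ) ^ p * a ^ p := by rw [hba, Real.mul_rpow two_pos.le ha.le]
      · rw [abs_of_neg hp0]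
        have h1 : ‖y‖ ^ p ≤ a ^ p :=
          Real.rpow_le_rpow_of_nonpos ha hya.le hp0.le
        have h2 : (1:ℝ) ≤ 2 ^ (-p) := by
          calc (1:ℝ) = 2 ^ (0:ℝ) := (Real.rpow_zero 2).symm
            _ ≤ 2 ^ (-p) := Real.rpow_le_rpow_of_exponent_le one_le_two (by linarith)
        nlinarith [Real.rpow_pos_of_pos ha p]
    -- integrate constant
    have step : ∫⁻ y in A n, ENNReal.ofReal (‖y‖ ^ p) ≤
        ENNReal.ofReal ((2:ℝ) ^ |p| * a ^ p) * volume (A n) := by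
      calc ∫⁻ y in A n, ENNReal.ofReal (‖y‖ ^ p)
          ≤ ∫⁻ _ in A n, ENNReal.ofReal ((2:ℝ) ^ |p| * a ^ p) :=
            setLIntegral_mono measurable_const ptw
        _ = ENNReal.ofReal ((2:ℝ) ^ |p| * a ^ p) * volume (A n) :=
            setLIntegral_const _ _
    have hvol : volume (A n) ≤ ENNReal.ofReal (b ^ d) * V := by
      calc volume (A n) ≤ volume (Metric.closedBall (0 : EuclideanSpace ℝ (Fin d)) b) :=
            measure_mono Set.diff_subset
        _ = ENNReal.ofReal (b ^ d) * V := by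
            rw [Measure.addHaar_closedBall _ _ hb.le, finrank_euclideanSpace_fin]
    -- real identity
    have pow2 : ∀ (m : ℕ) (c : ℝ), ((2:ℝ) ^ m) ^ c = 2 ^ ((m:ℝ) * c) := fun m c => by
      rw [← Real.rpow_natCast 2 m, ← Real.rpow_mul two_pos.le]
    have hdiv : ∀ (m : ℕ) (c : ℝ), (R / 2 ^ m) ^ c = R ^ c * 2 ^ (-((m:ℝ) * c)) := fun m c => by
      rw [Real.div_rpow hR (by positivity), pow2, Real.rpow_neg two_pos.le, div_eq_mul_inv]
    have hbd : b ^ d = b ^ ((d:ℕ):ℝ) := (Real.rpow_natCast b d).symm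
    have main : ((2:ℝ) ^ |p| * a ^ p) * b ^ d
        = (2:ℝ) ^ |p| * 2 ^ (-p) * (R ^ ε * ((2:ℝ) ^ (-ε)) ^ n) := by
      rw [hbd, ha_def, hb_def, hdiv (n+1) p, hdiv n ((d:ℕ):ℝ)]
      have hRpd : R ^ p * R ^ ((d:ℕ):ℝ) = R ^ ε := by
        rw [← Real.rpow_add hR0]; congr 1; rw [hp]; ring
      have hgeo : ((2:ℝ) ^ (-ε)) ^ n = (2:ℝ) ^ (-ε * (n:ℝ)) := by
        rw [← Real.rpow_natCast ((2:ℝ) ^ (-ε)) n, ← Real.rpow_mul two_pos.le]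
      have h2s : (2:ℝ) ^ (-(((n+1:ℕ):ℝ) * p)) * 2 ^ (-(((n:ℕ):ℝ) * ((d:ℕ):ℝ)))
          = 2 ^ (-p) * 2 ^ (-ε * (n:ℝ)) := by
        rw [← Real.rpow_add two_pos, ← Real.rpow_add two_pos]
        congr 1
        rw [hp]; push_cast; ring
      rw [hgeo]
      calc (2:ℝ) ^ |p| * (R ^ p * 2 ^ (-(((n+1:ℕ):ℝ) * p)))
            * (R ^ ((d:ℕ):ℝ) * 2 ^ (-(((n:ℕ):ℝ) * ((d:ℕ):ℝ))))
          = (2:ℝ) ^ |p| * ((R ^ p * R ^ ((d:ℕ):ℝ))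
            * ((2:ℝ) ^ (-(((n+1:ℕ):ℝ) * p)) * 2 ^ (-(((n:ℕ):ℝ) * ((d:ℕ):ℝ))))) := by ring
        _ = (2:ℝ) ^ |p| * (R ^ ε * ((2:ℝ) ^ (-p) * 2 ^ (-ε * (n:ℝ)))) := by rw [hRpd, h2s]
        _ = (2:ℝ) ^ |p| * 2 ^ (-p) * (R ^ ε * (2:ℝ) ^ (-ε * (n:ℝ))) := by ring
    calc ∫⁻ y in A n, ENNReal.ofReal (‖y‖ ^ p)
        ≤ ENNReal.ofReal ((2:ℝ) ^ |p| * a ^ p) * (ENNReal.ofReal (b ^ d) * V) := by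
          refine step.trans ?_
          exact mul_le_mul_right hvol _
      _ = ENNReal.ofReal (((2:ℝ) ^ |p| * a ^ p) * b ^ d) * V := by
          rw [ENNReal.ofReal_mul (show (0:ℝ) ≤ (2:ℝ) ^ |p| * a ^ p by positivity),
            ENNReal.ofReal_mul (show (0:ℝ) ≤ (2:ℝ) ^ |p| by positivity)]
          ring
      _ = ENNReal.ofReal ((2:ℝ) ^ |p| * 2 ^ (-p) * (R ^ ε * ((2:ℝ) ^ (-ε)) ^ n)) * V := by
          rw [main]
      _ = K * ENNReal.ofReal (R ^ ε) * q ^ n := by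
          rw [ENNReal.ofReal_mul (show (0:ℝ) ≤ (2:ℝ) ^ |p| * 2 ^ (-p) by positivity),
            ENNReal.ofReal_mul (show (0:ℝ) ≤ R ^ ε from Real.rpow_nonneg hR ε),
            ENNReal.ofReal_pow (show (0:ℝ) ≤ (2:ℝ) ^ (-ε) by positivity),
            ENNReal.ofReal_mul (show (0:ℝ) ≤ (2:ℝ) ^ |p| by positivity), hK, hq,
            ENNReal.ofReal_mul (show (0:ℝ) ≤ (2:ℝ) ^ |p| by positivity)]
          ring
  calc ∫⁻ y in Metric.closedBall (0 : EuclideanSpace ℝ (Fin d)) R,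
        ENNReal.ofReal (‖y‖ ^ (ε - d))
      ≤ ∫⁻ y in ({0} ∪ ⋃ n : ℕ, A n :
          Set (EuclideanSpace ℝ (Fin d))), ENNReal.ofReal (‖y‖ ^ p) := by
        rw [hp]; exact lintegral_mono_set cover
    _ ≤ (∫⁻ y in ({0} : Set (EuclideanSpace ℝ (Fin d))), ENNReal.ofReal (‖y‖ ^ p))
        + ∫⁻ y in (⋃ n : ℕ, A n), ENNReal.ofReal (‖y‖ ^ p) := lintegral_union_le _ _ _
    _ = ∫⁻ y in (⋃ n : ℕ, A n), ENNReal.ofReal (‖y‖ ^ p) := by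
        rw [setLIntegral_measure_zero _ _ (measure_singleton _), zero_add]
    _ ≤ ∑' n : ℕ, ∫⁻ y in A n, ENNReal.ofReal (‖y‖ ^ p) := lintegral_iUnion_le _ _
    _ ≤ ∑' n : ℕ, K * ENNReal.ofReal (R ^ ε) * q ^ n := ENNReal.tsum_le_tsum hmeas
    _ = K * ENNReal.ofReal (R ^ ε) * (1 - q)⁻¹ := by
        rw [ENNReal.tsum_mul_left, ENNReal.tsum_geometric]
    _ = K * (1 - q)⁻¹ * ENNReal.ofReal (R ^ ε) := by ring


/-- There is `C > 0` depending only on `d, α` such that for all `x`,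
with `R = |x|/2`:
`∫_{|y| ≤ R} |y|^{1-d-α} |ρ_α(x+y) - ρ_α(x-y)| dy ≤ C (1+|x|)^{-(d+α+1)} R^{2-α}`. -/
theorem stmt_19 (d : ℕ) (hd : 1 ≤ d) (α : ℝ) (hα : α ∈ Set.Ioo (0 : ℝ) 2) :
    ∃ C > (0 : ℝ), ∀ x : EuclideanSpace ℝ (Fin d),
      (∫ y in {y : EuclideanSpace ℝ (Fin d) | ‖y‖ ≤ ‖x‖ / 2},
          ‖y‖ ^ (1 - (d : ℝ) - α) * |rhoA d α (x + y) - rhoA d α (x - y)|)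
        ≤ C * (1 + ‖x‖) ^ (-((d : ℝ) + α + 1)) * (‖x‖ / 2) ^ (2 - α) := by
  obtain ⟨hα0, hα2⟩ := hα
  have hd0 : (0:ℝ) < (d:ℝ) + α := by
    have : (1:ℝ) ≤ (d:ℝ) := by exact_mod_cast hd
    linarith
  have hε : (0:ℝ) < 2 - α := by linarith
  obtain ⟨B, hBt, hB⟩ := lintegral_ball_rpow hd hε
  set C₁ : ℝ := ((d:ℝ)+α) * 2 ^ (((d:ℝ)+α)/2 + 1) * 2 ^ ((d:ℝ)+α+1) with hC₁
  have hC₁pos : 0 < C₁ := by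
    exact mul_pos (mul_pos hd0 (Real.rpow_pos_of_pos two_pos _)) (Real.rpow_pos_of_pos two_pos _)
  have hBR : 0 ≤ B.toReal := ENNReal.toReal_nonneg
  refine ⟨2 * C₁ * (B.toReal + 1), by positivity, fun x => ?_⟩
  set R : ℝ := ‖x‖ / 2 with hR
  have hR0 : 0 ≤ R := by rw [hR]; positivity
  set M : ℝ := C₁ * (1+‖x‖) ^ (-((d:ℝ)+α+1)) with hM
  have hMpos : 0 < M := mul_pos hC₁pos (Real.rpow_pos_of_pos (by positivity) _)
  set f : EuclideanSpace ℝ (Fin d) → ℝ :=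
    fun y => ‖y‖ ^ (1 - (d : ℝ) - α) * |rhoA d α (x + y) - rhoA d α (x - y)| with hf
  have hSeq : {y : EuclideanSpace ℝ (Fin d) | ‖y‖ ≤ ‖x‖ / 2}
      = Metric.closedBall (0 : EuclideanSpace ℝ (Fin d)) R := by
    ext y; rw [mem_closedBall_zero_iff]; rfl
  have hcont : Continuous (rhoA d α) :=
    continuous_iff_continuousAt.2 fun z => (rhoA_hasFDerivAt z).continuousAt
  have hfmeas : Measurable f := by
    apply Measurable.mul
    · fun_prop
    · exact ((hcont.comp (continuous_const.add continuous_id)).sub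
        (hcont.comp (continuous_const.sub continuous_id))).abs.measurable
  have hfnn : ∀ y, 0 ≤ f y := fun y =>
    mul_nonneg (Real.rpow_nonneg (norm_nonneg y) _) (abs_nonneg _)
  -- pointwise bound on the ball
  have ptw : ∀ y ∈ Metric.closedBall (0 : EuclideanSpace ℝ (Fin d)) R,
      ENNReal.ofReal (f y) ≤ ENNReal.ofReal (2 * M * ‖y‖ ^ ((2 - α) - (d:ℝ))) := by
    intro y hy
    rw [mem_closedBall_zero_iff] at hy
    apply ENNReal.ofReal_le_ofReal
    rcases eq_or_ne y 0 with rfl | hy0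
    · have : f 0 = 0 := by
        rw [hf]; simp
      rw [this]
      positivity
    · have hny : (0:ℝ) < ‖y‖ := norm_pos_iff.2 hy0
      have hdiff := diff_rhoA_bound hd0 x y hy
      calc f y ≤ ‖y‖ ^ (1 - (d : ℝ) - α) * (M * (2 * ‖y‖)) := by
            refine mul_le_mul_of_nonneg_left ?_ (Real.rpow_nonneg (norm_nonneg y) _)
            exact hdiff
        _ = 2 * M * (‖y‖ ^ (1 - (d : ℝ) - α) * ‖y‖) := by ring
        _ = 2 * M * ‖y‖ ^ ((2 - α) - (d:ℝ)) := by
            rw [← Real.rpow_add_one hny.ne' (1 - (d : ℝ) - α),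
              show (1 - (d : ℝ) - α) + 1 = (2 - α) - (d:ℝ) by ring]
  -- lintegral bound
  have hlint : ∫⁻ y in Metric.closedBall (0 : EuclideanSpace ℝ (Fin d)) R,
      ENNReal.ofReal (f y) ≤ ENNReal.ofReal (2*M) * (B * ENNReal.ofReal (R ^ (2-α))) := by
    calc ∫⁻ y in Metric.closedBall (0 : EuclideanSpace ℝ (Fin d)) R, ENNReal.ofReal (f y)
        ≤ ∫⁻ y in Metric.closedBall (0 : EuclideanSpace ℝ (Fin d)) R,
            ENNReal.ofReal (2 * M * ‖y‖ ^ ((2 - α) - (d:ℝ))) := by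
          refine setLIntegral_mono ?_ ptw
          apply Measurable.ennreal_ofReal
          fun_prop
      _ = ∫⁻ y in Metric.closedBall (0 : EuclideanSpace ℝ (Fin d)) R,
            ENNReal.ofReal (2 * M) * ENNReal.ofReal (‖y‖ ^ ((2 - α) - (d:ℝ))) := by
          congr 1
          ext y
          rw [ENNReal.ofReal_mul (by positivity)]
      _ = ENNReal.ofReal (2 * M) * ∫⁻ y in Metric.closedBall (0 : EuclideanSpace ℝ (Fin d)) R,
            ENNReal.ofReal (‖y‖ ^ ((2 - α) - (d:ℝ))) :=
          lintegral_const_mul' _ _ ENNReal.ofReal_ne_top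
      _ ≤ ENNReal.ofReal (2*M) * (B * ENNReal.ofReal (R ^ (2-α))) :=
          mul_le_mul_right (hB R hR0) _
  -- from Bochner to lintegral
  have heq : (∫ y in Metric.closedBall (0 : EuclideanSpace ℝ (Fin d)) R, f y)
      = (∫⁻ y in Metric.closedBall (0 : EuclideanSpace ℝ (Fin d)) R,
          ENNReal.ofReal (f y)).toReal := by
    rw [integral_eq_lintegral_of_nonneg_ae]
    · exact Filter.Eventually.of_forall hfnn
    · exact hfmeas.aestronglyMeasurable
  have hfin : ENNReal.ofReal (2*M) * (B * ENNReal.ofReal (R ^ (2-α))) ≠ ⊤ :=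
    ENNReal.mul_ne_top ENNReal.ofReal_ne_top (ENNReal.mul_ne_top hBt ENNReal.ofReal_ne_top)
  have hfinal : (∫ y in Metric.closedBall (0 : EuclideanSpace ℝ (Fin d)) R, f y)
      ≤ 2 * M * (B.toReal * R ^ (2-α)) := by
    rw [heq]
    refine (ENNReal.toReal_mono hfin hlint).trans_eq ?_
    rw [ENNReal.toReal_mul, ENNReal.toReal_mul, ENNReal.toReal_ofReal (by positivity),
      ENNReal.toReal_ofReal (Real.rpow_nonneg hR0 _)]
  rw [hSeq]
  refine hfinal.trans ?_
  have hpow : (0:ℝ) ≤ R ^ (2-α) := Real.rpow_nonneg hR0 _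
  calc 2 * M * (B.toReal * R ^ (2-α))
      = (2 * C₁ * B.toReal) * (1+‖x‖) ^ (-((d:ℝ)+α+1)) * R ^ (2-α) := by rw [hM]; ring
    _ ≤ (2 * C₁ * (B.toReal + 1)) * (1+‖x‖) ^ (-((d:ℝ)+α+1)) * R ^ (2-α) := by
        have h1 : (0:ℝ) ≤ (1+‖x‖) ^ (-((d:ℝ)+α+1)) :=
          (Real.rpow_pos_of_pos (by positivity) _).le
        gcongr
        linarith
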